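/- Let T be a bounded linear operator on a Banach space X that is an (m,p)-isometry. Then for all integers n ≥ m and all x ∈ X: ‖Tⁿx‖^p = ∑_{k=0}^{m-1} (-1)^{m-1-k} (n choose k) (n-1-k choose m-1-k) ‖T^k x‖^p. -/

import Mathlib

/-- `T` is an `(m,p)`-isometry: `∑_{k=0}^{m} (-1)^k (m choose k) ‖T^k x‖^p = 0` for all `x`. -/
def IsMPIsometry {𝕜 X : Type*} [RCLike 𝕜] [NormedAddCommGroup X] [NormedSpace 𝕜 X]
    (T : X →L[𝕜] X) (m : ℕ) (p : ℝ) : Prop :=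
  ∀ x : X, ∑ k ∈ Finset.range (m + 1), (-1 : ℝ) ^ k * (m.choose k : ℝ) * ‖(T ^ k) x‖ ^ p = 0

/-- Partial alternating sum of binomial coefficients. -/
lemma alt_sum_choose (M : ℕ) : ∀ s : ℕ,
    ∑ t ∈ Finset.range (s + 1), (-1 : ℝ) ^ t * ((M + 1).choose t : ℝ)
      = (-1) ^ s * (M.choose s : ℝ) := by
  intro s
  induction s with
  | zero => simp
  | succ s ih =>
    rw [Finset.sum_range_succ, ih, Nat.choose_succ_succ' M s]
    push_cast
    ring

lemma coeff_id (n m i : ℕ) (hi : i < m) (hmn : m ≤ n) :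
    ∑ k ∈ Finset.Ico i m, (-1 : ℝ) ^ (k - i) * (n.choose k : ℝ) * (k.choose i : ℝ)
      = (-1) ^ (m - 1 - i) * (n.choose i : ℝ) * ((n - 1 - i).choose (m - 1 - i) : ℝ) := by
  rw [Finset.sum_Ico_eq_sum_range]
  have key : ∀ t ∈ Finset.range (m - i),
      (-1 : ℝ) ^ (i + t - i) * (n.choose (i + t) : ℝ) * ((i + t).choose i : ℝ)
        = (n.choose i : ℝ) * ((-1 : ℝ) ^ t * ((n - i).choose t : ℝ)) := by
    intro t ht
    have h1 : i + t ≤ n := by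
      have := Finset.mem_range.mp ht
      omega
    have h2 : n.choose (i + t) * (i + t).choose i = n.choose i * (n - i).choose (i + t - i) :=
      Nat.choose_mul (Nat.le_add_right i t)
    have h3 : i + t - i = t := by omega
    rw [h3] at h2 ⊢
    have h2' : (n.choose (i + t) : ℝ) * ((i + t).choose i : ℝ)
        = (n.choose i : ℝ) * ((n - i).choose t : ℝ) := by exact_mod_cast congrArg Nat.cast h2
    linear_combination ((-1 : ℝ) ^ t) * h2'
  rw [Finset.sum_congr rfl key, ← Finset.mul_sum]
  have hmi : m - i = (m - i - 1) + 1 := by omega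
  have hni : n - i = (n - i - 1) + 1 := by omega
  rw [hmi, hni, alt_sum_choose]
  have e1 : m - i - 1 = m - 1 - i := by omega
  have e2 : n - i - 1 = n - 1 - i := by omega
  rw [e1, e2]; ring

lemma fwdDiff_iter_zero_fun (j : ℕ) :
    (fwdDiff (1 : ℕ))^[j] (fun _ => (0 : ℝ)) = fun _ => 0 := by
  induction j with
  | zero => rfl
  | succ j ih => rw [Function.iterate_succ_apply, show fwdDiff (1:ℕ) (fun _ => (0:ℝ)) = fun _ => 0 by funext y; simp [fwdDiff], ih]

theorem stmt_6 {𝕜 X : Type*} [RCLike 𝕜] [NormedAddCommGroup X] [NormedSpace 𝕜 X]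
    [CompleteSpace X] (T : X →L[𝕜] X) (m : ℕ) (hm : 1 ≤ m) (p : ℝ) (hp : 0 < p)
    (hT : IsMPIsometry T m p) :
    ∀ n : ℕ, m ≤ n → ∀ x : X,
      ‖(T ^ n) x‖ ^ p = ∑ k ∈ Finset.range m, (-1 : ℝ) ^ (m - 1 - k) *
        (n.choose k : ℝ) * ((n - 1 - k).choose (m - 1 - k) : ℝ) * ‖(T ^ k) x‖ ^ p := by
  intro n hn x
  set f : ℕ → ℝ := fun i => ‖(T ^ i) x‖ ^ p with hf
  -- shifted isometry identity
  have hshift : ∀ j : ℕ, ∑ k ∈ Finset.range (m + 1),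
      (-1 : ℝ) ^ k * (m.choose k : ℝ) * f (j + k) = 0 := by
    intro j
    have := hT ((T ^ j) x)
    have e : ∀ k : ℕ, ‖(T ^ k) ((T ^ j) x)‖ = ‖(T ^ (j + k)) x‖ := by
      intro k
      rw [add_comm, pow_add, ContinuousLinearMap.mul_apply]
    simpa only [e] using this
  -- m-th forward difference of f vanishes
  have hD : (fwdDiff (1 : ℕ))^[m] f = fun _ => 0 := by
    funext j
    rw [fwdDiff_iter_eq_sum_shift]
    have : ∀ k ∈ Finset.range (m + 1),
        ((-1 : ℤ) ^ (m - k) * (m.choose k : ℤ)) • f (j + k • 1)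
          = (-1 : ℝ) ^ m * ((-1 : ℝ) ^ k * (m.choose k : ℝ) * f (j + k)) := by
      intro k hk
      have hk' : k ≤ m := by have := Finset.mem_range.mp hk; omega
      have hpow : (-1 : ℝ) ^ (m - k) = (-1 : ℝ) ^ m * (-1 : ℝ) ^ k := by
        rw [← pow_add, show m + k = (m - k) + 2 * k from by omega, pow_add, pow_mul]
        norm_num
      simp only [smul_eq_mul, mul_one, zsmul_eq_mul, Int.cast_mul, Int.cast_pow,
        Int.cast_neg, Int.cast_one, Int.cast_natCast, hpow]
      ring
    rw [Finset.sum_congr rfl this, ← Finset.mul_sum, hshift j, mul_zero]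
  -- higher differences vanish at 0
  have hDk : ∀ k, m ≤ k → (fwdDiff (1 : ℕ))^[k] f 0 = 0 := by
    intro k hk
    have : (fwdDiff (1 : ℕ))^[k] f = (fwdDiff (1 : ℕ))^[k - m] ((fwdDiff (1 : ℕ))^[m] f) := by
      rw [← Function.iterate_add_apply]
      congr 1
      omega
    rw [this, hD, fwdDiff_iter_zero_fun]
  -- Newton formula
  have hNewton : f n = ∑ k ∈ Finset.range (n + 1),
      (n.choose k : ℝ) * (fwdDiff (1 : ℕ))^[k] f 0 := by
    have := shift_eq_sum_fwdDiff_iter (1 : ℕ) f n 0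
    simp only [zero_add, smul_eq_mul, nsmul_eq_mul, smul_mul_assoc] at this
    simpa [smul_eq_mul] using this
  have hsplit : f n = ∑ k ∈ Finset.range m,
      (n.choose k : ℝ) * (fwdDiff (1 : ℕ))^[k] f 0 := by
    rw [hNewton]
    exact (Finset.sum_subset (Finset.range_subset_range.mpr (by omega))
      (fun k hk hk' => by
        rw [hDk k (by simp at hk hk'; omega), mul_zero])).symm
  -- expand each forward difference
  have hexp : ∀ k, (fwdDiff (1 : ℕ))^[k] f 0
      = ∑ i ∈ Finset.range (k + 1), (-1 : ℝ) ^ (k - i) * (k.choose i : ℝ) * f i := by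
    intro k
    rw [fwdDiff_iter_eq_sum_shift]
    apply Finset.sum_congr rfl
    intro i hi
    simp only [zero_add, smul_eq_mul, zsmul_eq_mul, Int.cast_mul, Int.cast_pow, Int.cast_neg,
      Int.cast_one, Int.cast_natCast]
    ring_nf
  calc f n = ∑ k ∈ Finset.range m, ∑ i ∈ Finset.range m,
        (n.choose k : ℝ) * ((-1 : ℝ) ^ (k - i) * (k.choose i : ℝ) * f i) := by
        rw [hsplit]
        apply Finset.sum_congr rfl
        intro k hk
        rw [hexp k, Finset.mul_sum]
        apply Finset.sum_subset (Finset.range_subset_range.mpr (by simp at hk; omega))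
        intro i hi hi'
        have : k < i := by simp at hi hi'; omega
        rw [Nat.choose_eq_zero_of_lt this]
        simp
    _ = ∑ i ∈ Finset.range m, (∑ k ∈ Finset.range m,
        (-1 : ℝ) ^ (k - i) * (n.choose k : ℝ) * (k.choose i : ℝ)) * f i := by
        rw [Finset.sum_comm]
        apply Finset.sum_congr rfl
        intro i _
        rw [Finset.sum_mul]
        apply Finset.sum_congr rfl
        intro k _
        ring
    _ = ∑ i ∈ Finset.range m, (-1 : ℝ) ^ (m - 1 - i) *
        (n.choose i : ℝ) * ((n - 1 - i).choose (m - 1 - i) : ℝ) * f i := by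
        apply Finset.sum_congr rfl
        intro i hi
        have hi' : i < m := Finset.mem_range.mp hi
        have : ∑ k ∈ Finset.range m,
            (-1 : ℝ) ^ (k - i) * (n.choose k : ℝ) * (k.choose i : ℝ)
            = ∑ k ∈ Finset.Ico i m,
            (-1 : ℝ) ^ (k - i) * (n.choose k : ℝ) * (k.choose i : ℝ) := by
          symm
          apply Finset.sum_subset
          · intro k hk
            simp at hk ⊢; omega
          · intro k hk hk'
            have : k < i := by simp at hk hk'; omega
            rw [Nat.choose_eq_zero_of_lt this]
            simp
        rw [this, coeff_id n m i hi' hn]
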